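/- Let G be a connected graph on n ≥ 3 vertices. Then the 1-leaky forcing number of G equals n − 1 if and only if G is one of: the complete graph K_n, the star S_n, the complete graph K_{n−1} with one pendant leaf attached, or K_n minus one edge. -/

import Mathlib

open SimpleGraph

namespace LF

variable {V : Type*}

/-- Vertices eventually forced blue, starting from `S`, with leak set `L`:
a blue vertex not in `L` whose every neighbor other than `w` is blue forces `w`. -/
inductive Forced (G : SimpleGraph V) (L S : Set V) : V → Prop
  | init (v : V) (hv : v ∈ S) : Forced G L S v
  | force (b w : V) (hb : Forced G L S b) (hbL : b ∉ L) (hadj : G.Adj b w)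
      (hall : ∀ u, G.Adj b u → u ≠ w → Forced G L S u) : Forced G L S w

/-- `S` is an ℓ-leaky forcing set of `G`. -/
def IsLeakyForcingSet (G : SimpleGraph V) (ℓ : ℕ) (S : Set V) : Prop :=
  ∀ L : Set V, L.ncard ≤ ℓ → ∀ v, Forced G L S v

/-- The ℓ-leaky forcing number `Z_{(ℓ)}(G)`. -/
noncomputable def leakyForcingNumber (G : SimpleGraph V) [Fintype V] (ℓ : ℕ) : ℕ :=
  sInf {k | ∃ S : Finset V, S.card = k ∧ IsLeakyForcingSet G ℓ ↑S}

/-- An ℓ-leaky fort: a nonempty set `F` such that at most ℓ vertices outside `F`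
have exactly one neighbor in `F`. -/
def IsLeakyFort (G : SimpleGraph V) (ℓ : ℕ) (F : Set V) : Prop :=
  F.Nonempty ∧ {v | v ∉ F ∧ ∃! u, u ∈ F ∧ G.Adj v u}.ncard ≤ ℓ

/-- The path graph on `n` vertices. -/
def pathGraph (n : ℕ) : SimpleGraph (Fin n) :=
  SimpleGraph.fromRel (fun i j => i.val + 1 = j.val)

/-- The cycle graph on `n` vertices. -/
def cycleGraph (n : ℕ) : SimpleGraph (Fin n) :=
  SimpleGraph.fromRel (fun i j => (i.val + 1) % n = j.val)

/-- The star graph on `n` vertices, with center `0`. -/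
def starGraph (n : ℕ) : SimpleGraph (Fin n) :=
  SimpleGraph.fromRel (fun i _ => i.val = 0)

/-- The generalized Petersen graph `P(n,k)`: `Sum.inl i` is the inner vertex `x_{i+1}`,
`Sum.inr i` is the outer vertex `y_{i+1}` (0-indexed). -/
def petersen (n k : ℕ) : SimpleGraph (Fin n ⊕ Fin n) :=
  SimpleGraph.fromRel (fun a b =>
    match a, b with
    | Sum.inr i, Sum.inr j => (i.val + 1) % n = j.val
    | Sum.inl i, Sum.inr j => i = j
    | Sum.inl i, Sum.inl j => (i.val + k) % n = j.val
    | _, _ => False)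

end LF

/-- The complete graph on the first `n-1` vertices of `Fin n`, with vertex `n-1`
attached as a pendant leaf to vertex `0`. -/
def LF.completePlusLeaf (n : ℕ) : SimpleGraph (Fin n) :=
  SimpleGraph.fromRel (fun i j =>
    (i.val + 1 < n ∧ j.val + 1 < n) ∨ (i.val + 1 = n ∧ j.val = 0))

/-- The complete graph on `Fin n` with the edge between vertices `0` and `1` deleted. -/
def LF.completeMinusEdge (n : ℕ) : SimpleGraph (Fin n) :=
  SimpleGraph.fromRel (fun i j =>
    ¬(i.val = 0 ∧ j.val = 1) ∧ ¬(i.val = 1 ∧ j.val = 0))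

namespace Stmt19Aux
open LF

variable {V : Type*}

/-- private neighbors of `x` w.r.t. the pair `(x,y)`. -/
def Pv (G : SimpleGraph V) (x y : V) : Set V := {b | G.Adj x b ∧ ¬ G.Adj y b ∧ b ≠ y}

/-- The failure condition for the co-pair set `{x,y}ᶜ`. -/
def Bad (G : SimpleGraph V) (x y : V) : Prop :=
  ∃ ℓ : V, (Pv G x y ⊆ {ℓ} ∨ G.neighborSet y ⊆ {ℓ}) ∧
           (Pv G y x ⊆ {ℓ} ∨ G.neighborSet x ⊆ {ℓ})

lemma forced_mono {G : SimpleGraph V} {L S T : Set V} (hST : S ⊆ T) {v : V}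
    (h : Forced G L S v) : Forced G L T v := by
  induction h with
  | init v hv => exact .init v (hST hv)
  | force b w hb hbL hadj hall ihb ihall => exact .force b w ihb hbL hadj ihall

lemma ilfs_mono {G : SimpleGraph V} {k : ℕ} {S T : Set V} (hST : S ⊆ T)
    (h : IsLeakyForcingSet G k S) : IsLeakyForcingSet G k T :=
  fun L hL v => forced_mono hST (h L hL v)

lemma subset_singleton_of_ncard_le_one {L : Set V} [Finite V] (x : V) (hL : L.ncard ≤ 1) :
    ∃ ℓ : V, L ⊆ {ℓ} := by
  rcases L.eq_empty_or_nonempty with h | ⟨a, ha⟩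
  · exact ⟨x, by simp [h]⟩
  · refine ⟨a, fun b hb => ?_⟩
    have := (Set.ncard_le_one (L.toFinite)).mp hL b hb a ha
    simp [this]

/-- one half of the success direction. -/
lemma copair_forced_all {G : SimpleGraph V} {L : Set V} {x y : V} (hxy : x ≠ y)
    (hb : ∃ b, b ∈ Pv G x y ∧ b ∉ L) (hcg : ∃ c, G.Adj y c ∧ c ∉ L) :
    ∀ v, Forced G L ({x, y}ᶜ : Set V) v := by
  obtain ⟨b, ⟨hbx, hby, hbey⟩, hbL⟩ := hb
  obtain ⟨c, hcy, hcL⟩ := hcg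
  have hinit : ∀ u, u ≠ x → u ≠ y → Forced G L ({x, y}ᶜ : Set V) u := by
    intro u h1 h2; exact .init u (by simp [h1, h2])
  have hfx : Forced G L ({x, y}ᶜ : Set V) x := by
    refine .force b x (hinit b hbx.ne' hbey) hbL hbx.symm ?_
    intro u hu hune
    refine hinit u hune (fun h => hby ?_)
    subst h; exact hu.symm
  have hfy : Forced G L ({x, y}ᶜ : Set V) y := by
    have hcney : c ≠ y := hcy.ne'
    have hcf : Forced G L ({x, y}ᶜ : Set V) c := by
      by_cases hcx : c = x
      · subst hcx; exact hfx
      · exact hinit c hcx hcney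
    refine .force c y hcf hcL hcy.symm ?_
    intro u hu hune
    by_cases hux : u = x
    · subst hux; exact hfx
    · exact hinit u hux hune
  intro v
  by_cases h1 : v = x
  · subst h1; exact hfx
  by_cases h2 : v = y
  · subst h2; exact hfy
  exact hinit v h1 h2

lemma not_forced_of_nbhd_leak {G : SimpleGraph V} {x ℓ : V} {S : Set V}
    (hx : x ∉ S) (hN : G.neighborSet x ⊆ {ℓ}) : ¬ Forced G {ℓ} S x := by
  intro h
  have key : ∀ v, Forced G {ℓ} S v → v ≠ x := by
    intro v hv
    induction hv with
    | init v hv => intro h; subst h; exact hx hv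
    | force b w hb hbL hadj hall ihb ihall =>
      intro h; subst h
      exact hbL (hN hadj.symm)
  exact key x h rfl

lemma copair_not_ilfs_iff {G : SimpleGraph V} [Finite V] {x y : V} (hxy : x ≠ y) :
    ¬ IsLeakyForcingSet G 1 ({x, y}ᶜ : Set V) ↔ Bad G x y := by
  constructor
  · intro hni
    by_contra hnb
    apply hni
    intro L hL v
    obtain ⟨ℓ, hLl⟩ := subset_singleton_of_ncard_le_one x hL
    have hnb' : (¬ Pv G x y ⊆ {ℓ} ∧ ¬ G.neighborSet y ⊆ {ℓ}) ∨
        (¬ Pv G y x ⊆ {ℓ} ∧ ¬ G.neighborSet x ⊆ {ℓ}) := by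
      by_contra hcon
      push_neg at hcon
      exact hnb ⟨ℓ, by tauto⟩
    have hne : ∀ (A : Set V), ¬ A ⊆ {ℓ} → ∃ b ∈ A, b ∉ L := by
      intro A hA
      obtain ⟨b, hbA, hbl⟩ := Set.not_subset.mp hA
      exact ⟨b, hbA, fun hbL => hbl (hLl hbL)⟩
    rcases hnb' with ⟨h1, h2⟩ | ⟨h1, h2⟩
    · obtain ⟨b, hb1, hb2⟩ := hne _ h1
      obtain ⟨c, hc1, hc2⟩ := hne _ h2
      exact copair_forced_all hxy ⟨b, hb1, hb2⟩ ⟨c, hc1, hc2⟩ v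
    · obtain ⟨b, hb1, hb2⟩ := hne _ h1
      obtain ⟨c, hc1, hc2⟩ := hne _ h2
      have := copair_forced_all hxy.symm ⟨b, hb1, hb2⟩ ⟨c, hc1, hc2⟩ v
      rwa [Set.pair_comm y x] at this
  · rintro ⟨ℓ, h1, h2⟩ hilfs
    have hforce := hilfs {ℓ} (by simp) 
    have hxS : x ∉ ({x, y}ᶜ : Set V) := by simp
    have hyS : y ∉ ({x, y}ᶜ : Set V) := by simp
    rcases h2 with h2 | h2
    · rcases h1 with h1 | h1
      · -- both Pv ⊆ {ℓ} : neither x nor y can ever be forced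
        have key : ∀ v, Forced G {ℓ} ({x, y}ᶜ : Set V) v → v ≠ x ∧ v ≠ y := by
          intro v hv
          induction hv with
          | init v hv => simpa using hv
          | force b w hb hbL hadj hall ihb ihall =>
            constructor
            · intro h; subst h
              have hby : ¬ G.Adj y b := by
                intro hyb
                exact (ihall y hyb.symm hxy.symm).2 rfl
              have : b ∈ Pv G w y := ⟨hadj.symm, hby, ihb.2⟩
              exact hbL (h1 this)
            · intro h; subst h
              have hbx : ¬ G.Adj x b := by
                intro hxb
                exact (ihall x hxb.symm hxy).1 rfl
              have : b ∈ Pv G w x := ⟨hadj.symm, hbx, ihb.1⟩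
              exact hbL (h2 this)
        exact (key x (hforce x)).1 rfl
      · exact not_forced_of_nbhd_leak hyS h1 (hforce y)
    · exact not_forced_of_nbhd_leak hxS h2 (hforce x)

end Stmt19Aux

namespace Stmt19Aux
open LF

variable {V : Type*} [DecidableEq V]
set_option linter.unusedSectionVars false

lemma ilfs_univ (G : SimpleGraph V) (k : ℕ) : IsLeakyForcingSet G k (Set.univ : Set V) :=
  fun _ _ v => .init v (Set.mem_univ v)

lemma exists_three [Fintype V] (hn : 3 ≤ Fintype.card V) :
    ∃ a b c : V, a ≠ b ∧ a ≠ c ∧ b ≠ c := by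
  have hnt : Nontrivial V := Fintype.one_lt_card_iff_nontrivial.mp (by omega)
  obtain ⟨a, b, hab⟩ := hnt.exists_pair_ne
  have hcompl : (({a, b}ᶜ : Finset V)).Nonempty := by
    rw [← Finset.card_pos, Finset.card_compl]
    have : ({a, b} : Finset V).card ≤ 2 := Finset.card_insert_le _ _ |>.trans (by simp)
    omega
  obtain ⟨c, hc⟩ := hcompl
  simp only [Finset.mem_compl, Finset.mem_insert, Finset.mem_singleton, not_or] at hc
  exact ⟨a, b, c, hab, fun h => hc.1 h.symm, fun h => hc.2 h.symm⟩

lemma walk_end_eq_or_adj {G : SimpleGraph V}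
    (hdeg : ∀ v a b, G.Adj v a → G.Adj v b → a = b) :
    ∀ u c : V, G.Walk u c → c = u ∨ G.Adj u c := by
  intro u c p
  induction p with
  | nil => exact Or.inl rfl
  | cons h q ih =>
    rcases ih with rfl | h2
    · exact Or.inr h
    · exact Or.inl (hdeg _ _ _ h.symm h2).symm

lemma exists_big {G : SimpleGraph V} [Fintype V] (hc : G.Connected)
    (hn : 3 ≤ Fintype.card V) : ∃ v a b : V, a ≠ b ∧ G.Adj v a ∧ G.Adj v b := by
  by_contra hcon
  push_neg at hcon
  have hdeg : ∀ v a b, G.Adj v a → G.Adj v b → a = b := by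
    intro v a b ha hb
    by_contra hne
    exact (hcon v a b hne ha) hb
  obtain ⟨a, b, c, hab, hac, hbc⟩ := exists_three hn
  have h1 := walk_end_eq_or_adj hdeg a b (hc a b).some
  have h2 := walk_end_eq_or_adj hdeg a c (hc a c).some
  rcases h1 with h1 | h1
  · exact hab h1.symm
  rcases h2 with h2 | h2
  · exact hac h2.symm
  exact hbc (hdeg a b c h1 h2)

lemma closed_set_univ {G : SimpleGraph V} (hc : G.Connected) (A : Set V)
    (hA : A.Nonempty) (hcl : ∀ u ∈ A, ∀ v, G.Adj u v → v ∈ A) : ∀ v, v ∈ A := by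
  obtain ⟨a, ha⟩ := hA
  intro v
  have key : ∀ u, u ∈ A → ∀ w, G.Walk u w → w ∈ A := by
    intro u hu w p
    induction p with
    | nil => exact hu
    | cons h q ih => exact ih (hcl _ hu _ h)
  exact key a ha v (hc a v).some

lemma exists_nbr {G : SimpleGraph V} [Fintype V] (hc : G.Connected)
    (hn : 3 ≤ Fintype.card V) (v : V) : ∃ w, G.Adj v w := by
  by_contra hcon
  push_neg at hcon
  obtain ⟨a, b, c, hab, hac, hbc⟩ := exists_three hn
  have : ∀ u, u ∈ ({v} : Set V) := by
    refine closed_set_univ hc _ ⟨v, rfl⟩ ?_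
    rintro u rfl w hw
    exact absurd hw (hcon w)
  have h1 := this a
  have h2 := this b
  simp only [Set.mem_singleton_iff] at h1 h2
  exact hab (h1.trans h2.symm)

lemma z_le_iff {G : SimpleGraph V} [Fintype V] {k : ℕ} :
    leakyForcingNumber G 1 ≤ k ↔ ∃ S : Finset V, S.card ≤ k ∧ IsLeakyForcingSet G 1 ↑S := by
  constructor
  · intro h
    have hne : {m | ∃ S : Finset V, S.card = m ∧ IsLeakyForcingSet G 1 ↑S}.Nonempty :=
      ⟨(Finset.univ : Finset V).card, Finset.univ, rfl, by
        simpa using ilfs_univ G 1⟩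
    obtain ⟨S, hS1, hS2⟩ := Nat.sInf_mem hne
    exact ⟨S, by rw [hS1]; exact h, hS2⟩
  · rintro ⟨S, h1, h2⟩
    exact le_trans (Nat.sInf_le ⟨S, rfl, h2⟩) h1

lemma z_upper {G : SimpleGraph V} [Fintype V] (hc : G.Connected)
    (hn : 3 ≤ Fintype.card V) : leakyForcingNumber G 1 ≤ Fintype.card V - 1 := by
  obtain ⟨v, a, b, hab, ha, hb⟩ := exists_big hc hn
  refine z_le_iff.mpr ⟨({v} : Finset V)ᶜ, ?_, ?_⟩
  · rw [Finset.card_compl]; simp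
  · intro L hL w
    obtain ⟨ℓ, hLl⟩ := subset_singleton_of_ncard_le_one v hL
    have hinit : ∀ u, u ≠ v → Forced G L (↑({v} : Finset V)ᶜ) u := by
      intro u hu; exact .init u (by simp [hu])
    by_cases hwv : w = v
    · subst hwv
      obtain ⟨c, hcadj, hcl⟩ : ∃ c, G.Adj w c ∧ c ≠ ℓ := by
        by_cases h1 : a = ℓ
        · exact ⟨b, hb, fun h => hab (h1 ▸ h ▸ rfl)⟩
        · exact ⟨a, ha, h1⟩
      refine .force c w (hinit c hcadj.ne') (fun h => hcl (hLl h)) hcadj.symm ?_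
      intro u hu hune
      exact hinit u hune
    · exact hinit w hwv

lemma z_eq_iff_bad {G : SimpleGraph V} [Fintype V] (hc : G.Connected)
    (hn : 3 ≤ Fintype.card V) :
    leakyForcingNumber G 1 = Fintype.card V - 1 ↔ ∀ x y : V, x ≠ y → Bad G x y := by
  have hub := z_upper hc hn
  have key : leakyForcingNumber G 1 ≤ Fintype.card V - 2 ↔
      ∃ x y : V, x ≠ y ∧ IsLeakyForcingSet G 1 ({x, y}ᶜ : Set V) := by
    rw [z_le_iff]
    constructor
    · rintro ⟨S, h1, h2⟩
      have hcard : 2 ≤ Sᶜ.card := by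
        rw [Finset.card_compl]; omega
      obtain ⟨x, hx, y, hy, hxy⟩ := Finset.one_lt_card.mp (by omega : 1 < Sᶜ.card)
      refine ⟨x, y, hxy, ilfs_mono ?_ h2⟩
      intro u hu
      simp only [Set.mem_compl_iff, Set.mem_insert_iff, Set.mem_singleton_iff, not_or]
      simp only [Finset.coe_sort_coe, Finset.mem_coe] at hu
      constructor
      · rintro rfl; exact (Finset.mem_compl.mp hx) hu
      · rintro rfl; exact (Finset.mem_compl.mp hy) hu
    · rintro ⟨x, y, hxy, h⟩
      refine ⟨({x, y} : Finset V)ᶜ, ?_, ?_⟩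
      · rw [Finset.card_compl, Finset.card_pair hxy]
      · have : (↑(({x, y} : Finset V)ᶜ) : Set V) = ({x, y}ᶜ : Set V) := by
          ext u
          simp [not_or, and_comm]
        rw [this]; exact h
  constructor
  · intro hz x y hxy
    by_contra hnb
    have h1 : IsLeakyForcingSet G 1 ({x, y}ᶜ : Set V) := by
      by_contra hni
      exact hnb ((copair_not_ilfs_iff hxy).mp hni)
    have := key.mpr ⟨x, y, hxy, h1⟩
    omega
  · intro hbad
    have hnle : ¬ leakyForcingNumber G 1 ≤ Fintype.card V - 2 := by
      intro hle
      obtain ⟨x, y, hxy, h⟩ := key.mp hle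
      exact (copair_not_ilfs_iff hxy).mpr (hbad x y hxy) h
    omega

end Stmt19Aux

namespace Stmt19Aux
open LF

variable {V : Type*}

/-- `G` is complete. -/
def SComplete (G : SimpleGraph V) : Prop := ∀ x y : V, x ≠ y → G.Adj x y

/-- `G` is a star with center `c`. -/
def SStar (G : SimpleGraph V) (c : V) : Prop := ∀ v, v ≠ c → ∀ u, (G.Adj v u ↔ u = c)

/-- `G` is a complete graph plus a pendant vertex `p` attached at `q`. -/
def SPlusLeaf (G : SimpleGraph V) (p q : V) : Prop :=
  p ≠ q ∧ (∀ u, G.Adj p u ↔ u = q) ∧ (∀ u v, u ≠ p → v ≠ p → u ≠ v → G.Adj u v)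

/-- `G` is a complete graph minus the edge `ab`. -/
def SMinusEdge (G : SimpleGraph V) (a b : V) : Prop :=
  a ≠ b ∧ ¬ G.Adj a b ∧ ∀ u v, u ≠ v → ¬(u = a ∧ v = b) → ¬(u = b ∧ v = a) → G.Adj u v

lemma SComplete.bad {G : SimpleGraph V} (h : SComplete G) {x y : V} (hxy : x ≠ y) :
    Bad G x y := by
  refine ⟨x, Or.inl ?_, Or.inl ?_⟩
  · rintro b ⟨h1, h2, h3⟩
    exact absurd (h y b (Ne.symm h3)) h2
  · rintro b ⟨h1, h2, h3⟩
    exact absurd (h x b (Ne.symm h3)) h2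

lemma SStar.bad {G : SimpleGraph V} {c : V} (h : SStar G c) {x y : V} (hxy : x ≠ y) :
    Bad G x y := by
  have hP : ∀ v w, v ≠ c → Pv G v w ⊆ {c} := by
    intro v w hv b hb
    exact ((h v hv b).mp hb.1)
  have hN : ∀ v, v ≠ c → G.neighborSet v ⊆ {c} := by
    intro v hv b hb
    exact (h v hv b).mp hb
  refine ⟨c, ?_, ?_⟩
  · by_cases hy : y = c
    · subst hy; exact Or.inl (hP x y hxy)
    · exact Or.inr (hN y hy)
  · by_cases hx : x = c
    · subst hx
      exact Or.inl (hP y x (Ne.symm hxy))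
    · exact Or.inr (hN x hx)

lemma SPlusLeaf.bad {G : SimpleGraph V} {p q : V} (h : SPlusLeaf G p q) {x y : V}
    (hxy : x ≠ y) : Bad G x y := by
  obtain ⟨hpq, hleaf, hclique⟩ := h
  have hNp : G.neighborSet p ⊆ {q} := fun b hb => (hleaf b).mp hb
  have hPp : ∀ w, Pv G p w ⊆ {q} := fun w b hb => (hleaf b).mp hb.1
  by_cases hxp : x = p
  · subst hxp
    exact ⟨q, Or.inl (hPp y), Or.inr hNp⟩
  by_cases hyp : y = p
  · subst hyp
    exact ⟨q, Or.inr hNp, Or.inl (hPp x)⟩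
  · -- x, y both in the clique
    refine ⟨p, Or.inl ?_, Or.inl ?_⟩
    · rintro b ⟨h1, h2, h3⟩
      by_contra hbp
      exact h2 (hclique y b hyp hbp (Ne.symm h3))
    · rintro b ⟨h1, h2, h3⟩
      by_contra hbp
      exact h2 (hclique x b hxp hbp (Ne.symm h3))

lemma SMinusEdge.bad {G : SimpleGraph V} {a b : V} (h : SMinusEdge G a b) {x y : V}
    (hxy : x ≠ y) : Bad G x y := by
  obtain ⟨hab, hnadj, hadj⟩ := h
  have hP : ∀ u w t, t ∈ Pv G u w → (w = a ∧ t = b) ∨ (w = b ∧ t = a) := by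
    rintro u w t ⟨h1, h2, h3⟩
    by_contra hcon
    push_neg at hcon
    apply h2
    refine hadj w t (Ne.symm h3) ?_ ?_
    · rintro ⟨rfl, rfl⟩; exact (hcon.1 rfl) rfl
    · rintro ⟨rfl, rfl⟩; exact (hcon.2 rfl) rfl
  have claim1 : ∀ u w, w ≠ b → Pv G u w ⊆ {b} := by
    intro u w hw t ht
    rcases hP u w t ht with ⟨_, rfl⟩ | ⟨hwb, _⟩
    · rfl
    · exact absurd hwb hw
  have claim2 : ∀ u w, w ≠ a → Pv G u w ⊆ {a} := by
    intro u w hw t ht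
    rcases hP u w t ht with ⟨hwa, _⟩ | ⟨_, rfl⟩
    · exact absurd hwa hw
    · rfl
  have claim3 : ∀ ℓ, Pv G a b ⊆ {ℓ} ∧ Pv G b a ⊆ {ℓ} := by
    intro ℓ
    constructor
    · intro t ht
      rcases hP a b t ht with ⟨hba, _⟩ | ⟨_, rfl⟩
      · exact absurd hba.symm hab
      · exact absurd ht.1 (G.irrefl)
    · intro t ht
      rcases hP b a t ht with ⟨_, rfl⟩ | ⟨hba, _⟩
      · exact absurd ht.1 (G.irrefl)
      · exact absurd hba hab
  by_cases h1 : y ≠ b ∧ x ≠ b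
  · exact ⟨b, Or.inl (claim1 x y h1.1), Or.inl (claim1 y x h1.2)⟩
  by_cases h2 : y ≠ a ∧ x ≠ a
  · exact ⟨a, Or.inl (claim2 x y h2.1), Or.inl (claim2 y x h2.2)⟩
  · -- {x, y} = {a, b}
    push_neg at h1 h2
    rcases eq_or_ne y b with hyb' | hyb
    · have hx : x = a := by
        rcases eq_or_ne y a with h' | h'
        · exact absurd (h'.symm.trans hyb') hab
        · exact h2 h'
      refine ⟨a, Or.inl ?_, Or.inl ?_⟩
      · rw [hx, hyb']; exact (claim3 a).1
      · rw [hx, hyb']; exact (claim3 a).2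
    · have hx : x = b := h1 hyb
      have hy : y = a := by
        rcases eq_or_ne y a with h' | h'
        · exact h'
        · exact absurd ((h2 h').symm.trans hx) hab
      refine ⟨a, Or.inl ?_, Or.inl ?_⟩
      · rw [hx, hy]; exact (claim3 a).2
      · rw [hx, hy]; exact (claim3 a).1

end Stmt19Aux

namespace Stmt19Aux
open LF

variable {V : Type*}

/-- `v` has at least two distinct neighbours. -/
def BigV (G : SimpleGraph V) (v : V) : Prop := ∃ a b, a ≠ b ∧ G.Adj v a ∧ G.Adj v b

lemma nonbig_nbhd {G : SimpleGraph V} {v w : V} (h : ¬ BigV G v) (hw : G.Adj v w) :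
    ∀ u, G.Adj v u ↔ u = w := by
  intro u
  constructor
  · intro hu
    by_contra hne
    exact h ⟨u, w, hne, hu, hw⟩
  · rintro rfl; exact hw

lemma not_three_in_pair {p q a b c : V} (ha : a = p ∨ a = q) (hb : b = p ∨ b = q)
    (hcc : c = p ∨ c = q) (hab : a ≠ b) (hac : a ≠ c) (hbc : b ≠ c) : False := by
  rcases ha with h | h <;> rcases hb with h' | h' <;> rcases hcc with h'' | h'' <;>
    simp_all

theorem classification {G : SimpleGraph V} [Fintype V] [DecidableEq V] (hc : G.Connected)
    (hn : 3 ≤ Fintype.card V) (hbad : ∀ x y : V, x ≠ y → Bad G x y) :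
    SComplete G ∨ (∃ c, SStar G c) ∨ (∃ p q, SPlusLeaf G p q) ∨
      (∃ a b, SMinusEdge G a b) := by
  have hnbr : ∀ v : V, ∃ w, G.Adj v w := exists_nbr hc hn
  have hBigN : ∀ {y ℓ : V}, BigV G y → ¬ (G.neighborSet y ⊆ {ℓ}) := by
    rintro y ℓ ⟨a, b, hab, ha, hb⟩ hsub
    have h1 : a = ℓ := hsub ha
    have h2 : b = ℓ := hsub hb
    exact hab (h1.trans h2.symm)
  have hNT : ∀ x y, x ≠ y → BigV G x → BigV G y →
      ∃ ℓ, Pv G x y ⊆ {ℓ} ∧ Pv G y x ⊆ {ℓ} := by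
    intro x y hxy hx hy
    obtain ⟨ℓ, h1, h2⟩ := hbad x y hxy
    refine ⟨ℓ, ?_, ?_⟩
    · rcases h1 with h1 | h1
      · exact h1
      · exact absurd h1 (hBigN hy)
    · rcases h2 with h2 | h2
      · exact h2
      · exact absurd h2 (hBigN hx)
  have hNT2 : ∀ x y, x ≠ y → BigV G x → BigV G y → ∀ s t,
      (s ∈ Pv G x y ∨ s ∈ Pv G y x) → (t ∈ Pv G x y ∨ t ∈ Pv G y x) → s = t := by
    intro x y hxy hx hy s t hs ht
    obtain ⟨ℓ, h1, h2⟩ := hNT x y hxy hx hy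
    have hs' : s = ℓ := by rcases hs with h | h; exacts [h1 h, h2 h]
    have ht' : t = ℓ := by rcases ht with h | h; exacts [h1 h, h2 h]
    exact hs'.trans ht'.symm
  by_cases hleaf : ∃ p, ¬ BigV G p
  · -- there is a leaf
    obtain ⟨p, hp⟩ := hleaf
    obtain ⟨q, hq⟩ := hnbr p
    have hpN : ∀ u, G.Adj p u ↔ u = q := nonbig_nbhd hp hq
    have hpq : p ≠ q := hq.ne
    have hqBig : BigV G q := by
      by_contra hq2
      have hqN : ∀ u, G.Adj q u ↔ u = p := nonbig_nbhd hq2 hq.symm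
      have hclosed : ∀ v : V, v ∈ ({p, q} : Set V) := by
        refine closed_set_univ hc _ ⟨p, by simp⟩ ?_
        rintro u hu v hv
        rcases hu with rfl | hu
        · right; exact (hpN v).mp hv
        · rcases hu with rfl
          left; exact (hqN v).mp hv
      obtain ⟨a, b, c, hab, hac, hbc⟩ := exists_three hn
      have ha := hclosed a; have hb := hclosed b; have hcc := hclosed c
      simp only [Set.mem_insert_iff, Set.mem_singleton_iff] at ha hb hcc
      exact not_three_in_pair ha hb hcc hab hac hbc
    by_cases hstar : ∀ z, z ≠ p → z ≠ q → ¬ BigV G z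
    · -- star with center q
      refine Or.inr (Or.inl ⟨q, ?_⟩)
      intro v hv
      by_cases hvp : v = p
      · intro u; rw [hvp]; exact hpN u
      · obtain ⟨w, hw⟩ := hnbr v
        have hvN : ∀ u, G.Adj v u ↔ u = w := nonbig_nbhd (hstar v hvp hv) hw
        have hwp : w ≠ p := by
          rintro rfl
          exact hv ((hpN v).mp hw.symm)
        have hwq : w = q := by
          by_contra hwq
          have hwN : ∀ u, G.Adj w u ↔ u = v := nonbig_nbhd (hstar w hwp hwq) hw.symm
          have hclosed : ∀ z : V, z ∈ ({v, w} : Set V) := by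
            refine closed_set_univ hc _ ⟨v, by simp⟩ ?_
            rintro u hu z hz
            rcases hu with rfl | hu
            · right; exact (hvN z).mp hz
            · rcases hu with rfl
              left; exact (hwN z).mp hz
          have := hclosed p
          simp only [Set.mem_insert_iff, Set.mem_singleton_iff] at this
          rcases this with h | h
          · exact hvp h.symm
          · exact hwp h.symm
        intro u; rw [← hwq]; exact hvN u
    · -- complete plus pendant leaf
      push_neg at hstar
      obtain ⟨z₀, hz₀p, hz₀q, hz₀Big⟩ := hstar
      have hallBig : ∀ z, z ≠ p → BigV G z := by
        intro z hzp
        by_cases hzq : z = q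
        · rw [hzq]; exact hqBig
        by_contra hzB
        obtain ⟨w, hw⟩ := hnbr z
        have hzN : ∀ u, G.Adj z u ↔ u = w := nonbig_nbhd hzB hw
        have hwp : w ≠ p := by
          rintro rfl
          exact hzq ((hpN z).mp hw.symm)
        have hnadj_p : ∀ t, t ≠ q → ¬ G.Adj t p := by
          intro t ht hadj
          exact ht ((hpN t).mp hadj.symm)
        by_cases hwq : w = q
        · -- z is a leaf attached to q; use the pair (q, z₀)
          have hzz₀ : z ≠ z₀ := by
            rintro rfl; exact hzB hz₀Big
          have hp_mem : p ∈ Pv G q z₀ := by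
            refine ⟨hq.symm, ?_, Ne.symm hz₀p⟩
            intro hadj; exact hz₀q ((hpN z₀).mp hadj.symm)
          have hz_mem : z ∈ Pv G q z₀ := by
            refine ⟨?_, ?_, hzz₀⟩
            · have : G.Adj z q := by rw [hzN q]; exact hwq.symm
              exact this.symm
            · intro hadj
              have := (hzN z₀).mp hadj.symm
              exact hz₀q (this ▸ hwq ▸ rfl)
          exact hzp (hNT2 q z₀ (Ne.symm hz₀q) hqBig hz₀Big p z (Or.inl hp_mem)
            (Or.inl hz_mem)).symm
        · -- w is in T
          have hwBig : BigV G w := by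
            by_contra hwB
            have hwN : ∀ u, G.Adj w u ↔ u = z := nonbig_nbhd hwB hw.symm
            have hclosed : ∀ u : V, u ∈ ({z, w} : Set V) := by
              refine closed_set_univ hc _ ⟨z, by simp⟩ ?_
              rintro u hu v hv
              rcases hu with rfl | hu
              · right; exact (hzN v).mp hv
              · rcases hu with rfl
                left; exact (hwN v).mp hv
            have := hclosed p
            simp only [Set.mem_insert_iff, Set.mem_singleton_iff] at this
            rcases this with h | h
            · exact hzp h.symm
            · exact hwp h.symm
          have hp_mem : p ∈ Pv G q w := by
            refine ⟨hq.symm, ?_, Ne.symm hwp⟩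
            intro hadj; exact hwq ((hpN w).mp hadj.symm)
          have hz_mem : z ∈ Pv G w q := by
            refine ⟨hw.symm, ?_, hzq⟩
            intro hadj
            exact hwq ((hzN q).mp hadj.symm).symm
          exact hzp (hNT2 q w (fun h => hwq h.symm) hqBig hwBig p z (Or.inl hp_mem)
            (Or.inr hz_mem)).symm
      have hq_pv : ∀ u, u ≠ p → u ≠ q → Pv G q u ⊆ {p} ∧ Pv G u q ⊆ {p} := by
        intro u hup huq
        obtain ⟨ℓ, hl1, hl2⟩ := hNT q u (Ne.symm huq) hqBig (hallBig u hup)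
        have hp_mem : p ∈ Pv G q u := by
          refine ⟨hq.symm, ?_, Ne.symm hup⟩
          intro hadj; exact huq ((hpN u).mp hadj.symm)
        have hℓ : ℓ = p := (hl1 hp_mem).symm
        rw [hℓ] at hl1 hl2
        exact ⟨hl1, hl2⟩
      have hq_adj : ∀ u, u ≠ p → u ≠ q → G.Adj q u := by
        intro u hup huq
        by_contra hqu
        obtain ⟨hl1, hl2⟩ := hq_pv u hup huq
        have hNu : ∀ t, G.Adj u t → G.Adj q t := by
          intro t ht
          by_cases htq : G.Adj q t
          · exact htq
          · have htq' : t ≠ q := by rintro rfl; exact hqu ht.symm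
            have : t ∈ Pv G u q := ⟨ht, fun h => htq h, htq'⟩
            have := hl2 this
            rw [Set.mem_singleton_iff] at this
            subst this
            exact absurd ((hpN u).mp ht.symm) huq
        obtain ⟨w1, hw1⟩ := hnbr u
        have hw1q : G.Adj q w1 := hNu w1 hw1
        have hw1p : w1 ≠ p := by
          rintro rfl; exact huq ((hpN u).mp hw1.symm)
        have hw1Big : BigV G w1 := hallBig w1 hw1p
        have hp_mem : p ∈ Pv G q w1 := by
          refine ⟨hq.symm, ?_, Ne.symm hw1p⟩
          intro hadj
          exact hw1q.ne' ((hpN w1).mp hadj.symm)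
        have hu_mem : u ∈ Pv G w1 q := by
          refine ⟨hw1.symm, fun h => hqu h, huq⟩
        exact hup (hNT2 q w1 hw1q.ne hqBig hw1Big p u (Or.inl hp_mem)
          (Or.inr hu_mem)).symm
      have hclique : ∀ u v, u ≠ p → v ≠ p → u ≠ v → G.Adj u v := by
        intro u v hup hvp huv
        by_cases huq : u = q
        · rw [huq]
          exact hq_adj v hvp (fun h => huv (huq.trans h.symm))
        by_cases hvq : v = q
        · rw [hvq]
          exact (hq_adj u hup huq).symm
        by_contra huv2
        obtain ⟨hl1, _⟩ := hq_pv u hup huq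
        have hv_mem : v ∈ Pv G q u := ⟨hq_adj v hvp hvq, huv2, Ne.symm huv⟩
        exact hvp (hl1 hv_mem)
      exact Or.inr (Or.inr (Or.inl ⟨p, q, hpq, hpN, hclique⟩))
  · -- no leaf: every vertex is Big
    push_neg at hleaf
    have gad : ∀ x y z w : V, y ≠ z → y ≠ x → z ≠ x → ¬ G.Adj x y → ¬ G.Adj x z →
        G.Adj w y → G.Adj w z → False := by
      intro x y z w hyz hyx hzx hxy hxz hwy hwz
      have hwx : w ≠ x := by rintro rfl; exact hxy hwy
      exact hyz (hNT2 x w (Ne.symm hwx) (hleaf x) (hleaf w) y z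
        (Or.inr ⟨hwy, hxy, hyx⟩) (Or.inr ⟨hwz, hxz, hzx⟩))
    have CN : ∀ x y, x ≠ y → ¬ G.Adj x y → ∃ w, G.Adj x w ∧ G.Adj y w := by
      intro x y hxy hnadj
      obtain ⟨a, b, hab, ha, hb⟩ := hleaf x
      by_cases haY : G.Adj y a
      · exact ⟨a, ha, haY⟩
      by_cases hbY : G.Adj y b
      · exact ⟨b, hb, hbY⟩
      refine absurd (hNT2 x y hxy (hleaf x) (hleaf y) a b ?_ ?_) hab
      · exact Or.inl ⟨ha, haY, by rintro rfl; exact hnadj ha⟩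
      · exact Or.inl ⟨hb, hbY, by rintro rfl; exact hnadj hb⟩
    have Cl1 : ∀ x y z : V, y ≠ z → x ≠ y → x ≠ z → ¬ G.Adj x y → ¬ G.Adj x z →
        False := by
      intro x y z hyz hxy hxz h1 h2
      by_cases hyz2 : G.Adj y z
      · have hsub : ∀ t, G.Adj x t → G.Adj y t := by
          intro t ht
          by_contra hyt
          have htz := hNT2 x y hxy (hleaf x) (hleaf y) t z
            (Or.inl ⟨ht, hyt, by rintro rfl; exact h1 ht⟩)
            (Or.inr ⟨hyz2, h2, Ne.symm hxz⟩)
          exact h2 (htz ▸ ht)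
        have hsubz : ∀ t, G.Adj x t → G.Adj z t := by
          intro t ht
          by_contra hzt
          have hty := hNT2 x z hxz (hleaf x) (hleaf z) t y
            (Or.inl ⟨ht, hzt, by rintro rfl; exact h2 ht⟩)
            (Or.inr ⟨hyz2.symm, h1, Ne.symm hxy⟩)
          exact h1 (hty ▸ ht)
        obtain ⟨w, hw⟩ := hnbr x
        exact gad x y z w hyz (Ne.symm hxy) (Ne.symm hxz) h1 h2 (hsub w hw).symm
          (hsubz w hw).symm
      · obtain ⟨w, hwy, hwz⟩ := CN y z hyz hyz2
        exact gad x y z w hyz (Ne.symm hxy) (Ne.symm hxz) h1 h2 hwy.symm hwz.symm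
    by_cases hcomp : ∀ x y : V, x ≠ y → G.Adj x y
    · exact Or.inl hcomp
    · push_neg at hcomp
      obtain ⟨a, b, hab, hnadj⟩ := hcomp
      refine Or.inr (Or.inr (Or.inr ⟨a, b, hab, hnadj, ?_⟩))
      intro u v huv hn1 hn2
      by_contra hadj2
      by_cases hua : u = a
      · have hvb : v ≠ b := fun h => hn1 ⟨hua, h⟩
        have hva : v ≠ a := fun h => huv (hua.trans h.symm)
        exact Cl1 a b v (Ne.symm hvb) hab (Ne.symm hva) hnadj
          (by rw [← hua]; exact hadj2)
      by_cases hub : u = b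
      · have hva : v ≠ a := fun h => hn2 ⟨hub, h⟩
        have hvb : v ≠ b := fun h => huv (hub.trans h.symm)
        exact Cl1 b a v (Ne.symm hva) (Ne.symm hab) (Ne.symm hvb)
          (fun h => hnadj h.symm) (by rw [← hub]; exact hadj2)
      by_cases hva : v = a
      · exact Cl1 a b u (Ne.symm hub) hab (Ne.symm hua) hnadj
          (by rw [← hva]; exact fun h => hadj2 h.symm)
      by_cases hvb : v = b
      · exact Cl1 b a u (Ne.symm hua) (Ne.symm hab) (Ne.symm hub)
          (fun h => hnadj h.symm) (by rw [← hvb]; exact fun h => hadj2 h.symm)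
      · -- all four distinct; all cross edges present
        have hau : G.Adj a u := by
          by_contra h
          exact Cl1 a b u (Ne.symm hub) hab (Ne.symm hua) hnadj h
        have hav : G.Adj a v := by
          by_contra h
          exact Cl1 a b v (Ne.symm hvb) hab (Ne.symm hva) hnadj h
        have hbu : G.Adj b u := by
          by_contra h
          exact Cl1 b a u (Ne.symm hua) (Ne.symm hab) (Ne.symm hub)
            (fun h' => hnadj h'.symm) h
        have hvb' := hNT2 a u (Ne.symm hua) (hleaf a) (hleaf u) v b
          (Or.inl ⟨hav, hadj2, Ne.symm huv⟩)
          (Or.inr ⟨hbu.symm, hnadj, Ne.symm hab⟩)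
        exact hvb hvb'

end Stmt19Aux

namespace Stmt19Aux
open LF

variable {V : Type*}

lemma equiv_eq_iff {n : ℕ} (e : V ≃ Fin n) {x : V} {i : Fin n} (hx : e x = i) :
    ∀ u, (e u = i ↔ u = x) := by
  intro u
  constructor
  · intro h; exact e.injective (h.trans hx.symm)
  · rintro rfl; exact hx

lemma exists_equiv_two [Fintype V] {x y : V} {i j : Fin (Fintype.card V)}
    (hxy : x ≠ y) (hij : i ≠ j) :
    ∃ e : V ≃ Fin (Fintype.card V), e x = i ∧ e y = j := by
  classical
  let e₀ := Fintype.equivFin V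
  let e₁ := e₀.trans (Equiv.swap (e₀ x) i)
  have h1 : e₁ x = i := by simp [e₁]
  let e₂ := e₁.trans (Equiv.swap (e₁ y) j)
  have h2 : e₂ y = j := by simp [e₂]
  refine ⟨e₂, ?_, h2⟩
  have hyi : e₁ y ≠ i := by
    intro h
    exact hxy (e₁.injective (h1.trans h.symm))
  have : e₂ x = Equiv.swap (e₁ y) j i := by simp [e₂, h1]
  rw [this, Equiv.swap_apply_of_ne_of_ne (Ne.symm hyi) hij]

lemma exists_equiv_one [Fintype V] (x : V) (i : Fin (Fintype.card V)) :
    ∃ e : V ≃ Fin (Fintype.card V), e x = i := by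
  classical
  exact ⟨(Fintype.equivFin V).trans (Equiv.swap ((Fintype.equivFin V) x) i), by simp⟩

lemma starGraph_adj {n : ℕ} (i j : Fin n) :
    (LF.starGraph n).Adj i j ↔ i ≠ j ∧ ((i : ℕ) = 0 ∨ (j : ℕ) = 0) := by
  simp [LF.starGraph, SimpleGraph.fromRel_adj]

lemma completePlusLeaf_adj {n : ℕ} (i j : Fin n) :
    (completePlusLeaf n).Adj i j ↔ i ≠ j ∧
      (((i : ℕ) + 1 < n ∧ (j : ℕ) + 1 < n) ∨ ((i : ℕ) + 1 = n ∧ (j : ℕ) = 0) ∨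
        ((j : ℕ) + 1 = n ∧ (i : ℕ) = 0)) := by
  simp only [completePlusLeaf, SimpleGraph.fromRel_adj]
  constructor
  · rintro ⟨h, h2 | h2⟩ <;> exact ⟨h, by tauto⟩
  · rintro ⟨h, h2⟩ <;> exact ⟨h, by tauto⟩

lemma completeMinusEdge_adj {n : ℕ} (i j : Fin n) :
    (completeMinusEdge n).Adj i j ↔ i ≠ j ∧
      ¬(((i : ℕ) = 0 ∧ (j : ℕ) = 1) ∨ ((i : ℕ) = 1 ∧ (j : ℕ) = 0)) := by
  simp only [completeMinusEdge, SimpleGraph.fromRel_adj]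
  constructor
  · rintro ⟨h, h2 | h2⟩ <;> exact ⟨h, by tauto⟩
  · rintro ⟨h, h2⟩
    exact ⟨h, Or.inl (by tauto)⟩

section WithCard
variable {G : SimpleGraph V} [Fintype V]

lemma scomplete_iff_iso :
    SComplete G ↔ Nonempty (G ≃g (⊤ : SimpleGraph (Fin (Fintype.card V)))) := by
  constructor
  · intro h
    have hG : G = ⊤ := by
      ext x y
      simp only [SimpleGraph.top_adj]
      exact ⟨fun ha => ha.ne, fun hne => h x y hne⟩
    subst hG
    exact ⟨SimpleGraph.Iso.completeGraph (Fintype.equivFin V)⟩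
  · rintro ⟨e⟩ x y hxy
    have := e.map_rel_iff (a := x) (b := y)
    rw [← this]
    simp only [SimpleGraph.top_adj]
    exact fun h => hxy (e.injective h)

lemma sstar_adj_char {G : SimpleGraph V} {c : V} (h : SStar G c) (u v : V) :
    G.Adj u v ↔ u ≠ v ∧ (u = c ∨ v = c) := by
  constructor
  · intro ha
    refine ⟨ha.ne, ?_⟩
    by_cases hu : u = c
    · exact Or.inl hu
    · exact Or.inr ((h u hu v).mp ha)
  · rintro ⟨hne, hu | hv⟩
    · subst hu
      exact ((h v (Ne.symm hne) u).mpr rfl).symm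
    · subst hv
      exact (h u hne v).mpr rfl

lemma sstar_iff_iso (hn : 3 ≤ Fintype.card V) :
    (∃ c, SStar G c) ↔ Nonempty (G ≃g LF.starGraph (Fintype.card V)) := by
  have h0 : 0 < Fintype.card V := by omega
  set n := Fintype.card V with hn'
  constructor
  · rintro ⟨c, hc⟩
    obtain ⟨e, he⟩ := exists_equiv_one c ⟨0, h0⟩
    refine ⟨⟨e, ?_⟩⟩
    intro a b
    rw [Stmt19Aux.starGraph_adj, sstar_adj_char hc a b]
    have ha := equiv_eq_iff e he a
    have hb := equiv_eq_iff e he b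
    constructor
    · rintro ⟨hne, h1 | h1⟩
      · refine ⟨fun h => hne (congrArg e h), Or.inl (ha.mp (Fin.ext h1))⟩
      · refine ⟨fun h => hne (congrArg e h), Or.inr (hb.mp (Fin.ext h1))⟩
    · rintro ⟨hne, h1 | h1⟩
      · exact ⟨fun h => hne (e.injective h), Or.inl (by rw [ha.mpr h1])⟩
      · exact ⟨fun h => hne (e.injective h), Or.inr (by rw [hb.mpr h1])⟩
  · rintro ⟨e⟩
    refine ⟨e.symm ⟨0, h0⟩, ?_⟩
    intro v hv u
    have hvz : e v ≠ ⟨0, h0⟩ := by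
      intro h
      apply hv
      rw [← e.symm_apply_apply v]
      exact congrArg e.symm h
    constructor
    · intro ha
      have := e.map_rel_iff.mpr ha
      rw [Stmt19Aux.starGraph_adj] at this
      obtain ⟨hne, h1 | h1⟩ := this
      · exact absurd (Fin.ext h1 : e v = ⟨0, h0⟩) hvz
      · have : e u = ⟨0, h0⟩ := Fin.ext h1
        rw [← e.symm_apply_apply u, this]
    · rintro rfl
      apply e.map_rel_iff.mp
      rw [Stmt19Aux.starGraph_adj]
      have heu : e (e.symm ⟨0, h0⟩) = ⟨0, h0⟩ := e.apply_symm_apply _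
      refine ⟨?_, Or.inr (by rw [heu])⟩
      rw [heu]
      exact hvz
end WithCard

end Stmt19Aux

namespace Stmt19Aux
open LF

variable {V : Type*}

lemma val_eq_iff {n k : ℕ} (e : V ≃ Fin n) {x : V} {hk : k < n}
    (hx : e x = ⟨k, hk⟩) : ∀ u, ((e u : ℕ) = k ↔ u = x) := by
  intro u
  rw [← equiv_eq_iff e hx u]
  exact ⟨fun h => Fin.ext h, fun h => congrArg Fin.val h⟩

lemma splusleaf_adj_char {G : SimpleGraph V} {p q : V} (h : SPlusLeaf G p q) (u v : V) :
    G.Adj u v ↔ u ≠ v ∧ ((u ≠ p ∧ v ≠ p) ∨ (u = p ∧ v = q) ∨ (v = p ∧ u = q)) := by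
  obtain ⟨hpq, hleaf, hclique⟩ := h
  constructor
  · intro ha
    refine ⟨ha.ne, ?_⟩
    by_cases hu : u = p
    · subst hu
      exact Or.inr (Or.inl ⟨rfl, (hleaf v).mp ha⟩)
    by_cases hv : v = p
    · subst hv
      exact Or.inr (Or.inr ⟨rfl, (hleaf u).mp ha.symm⟩)
    · exact Or.inl ⟨hu, hv⟩
  · rintro ⟨hne, ⟨hu, hv⟩ | ⟨hu, hv⟩ | ⟨hu, hv⟩⟩
    · exact hclique u v hu hv hne
    · rw [hu, hv]; exact (hleaf q).mpr rfl
    · rw [hu, hv]; exact ((hleaf q).mpr rfl).symm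

lemma sminusedge_adj_char {G : SimpleGraph V} {a b : V} (h : SMinusEdge G a b) (u v : V) :
    G.Adj u v ↔ u ≠ v ∧ ¬((u = a ∧ v = b) ∨ (u = b ∧ v = a)) := by
  obtain ⟨hab, hnadj, hadj⟩ := h
  constructor
  · intro ha
    refine ⟨ha.ne, ?_⟩
    rintro (⟨rfl, rfl⟩ | ⟨rfl, rfl⟩)
    · exact hnadj ha
    · exact hnadj ha.symm
  · rintro ⟨hne, hno⟩
    exact hadj u v hne (fun hcon => hno (Or.inl hcon)) (fun hcon => hno (Or.inr hcon))

section WithCard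
variable {G : SimpleGraph V} [Fintype V]

lemma splusleaf_iff_iso (hn : 3 ≤ Fintype.card V) :
    (∃ p q, SPlusLeaf G p q) ↔ Nonempty (G ≃g completePlusLeaf (Fintype.card V)) := by
  set n := Fintype.card V with hcard
  have h0 : 0 < n := by omega
  have hlast : n - 1 < n := by omega
  constructor
  · rintro ⟨p, q, hpl⟩
    have hpq : p ≠ q := hpl.1
    have hij : (⟨n - 1, hlast⟩ : Fin n) ≠ ⟨0, h0⟩ := by
      intro h; rw [Fin.mk.injEq] at h; omega
    obtain ⟨e, hep, heq⟩ := exists_equiv_two (x := p) (y := q) hpq hij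
    have hvp : ∀ u, ((e u : ℕ) = n - 1 ↔ u = p) := val_eq_iff e hep
    have hvq : ∀ u, ((e u : ℕ) = 0 ↔ u = q) := val_eq_iff e heq
    have hA : ∀ u, ((e u : ℕ) + 1 = n ↔ u = p) := by
      intro u; have h := (e u).isLt; rw [← hvp u]; omega
    have hB : ∀ u, ((e u : ℕ) + 1 < n ↔ ¬ u = p) := by
      intro u; have h := (e u).isLt; rw [← hvp u]; omega
    refine ⟨⟨e, ?_⟩⟩
    intro u v
    rw [completePlusLeaf_adj, splusleaf_adj_char hpl u v]
    rw [hA u, hB u, hA v, hB v, hvq u, hvq v]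
    simp only [ne_eq, EmbeddingLike.apply_eq_iff_eq] <;> tauto
  · rintro ⟨e⟩
    refine ⟨e.symm ⟨n - 1, hlast⟩, e.symm ⟨0, h0⟩, ?_, ?_, ?_⟩
    · intro h
      have := e.symm.injective h
      rw [Fin.mk.injEq] at this; omega
    · intro u
      have hadj : G.Adj (e.symm ⟨n - 1, hlast⟩) u ↔ _ :=
        (e.map_rel_iff (a := e.symm ⟨n - 1, hlast⟩) (b := u)).symm
      rw [hadj, e.apply_symm_apply, completePlusLeaf_adj]
      have hu := (e u).isLt
      constructor
      · rintro ⟨hne, ⟨h1, _⟩ | ⟨_, h2⟩ | ⟨_, h3⟩⟩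
        · have : n - 1 + 1 < n := h1; omega
        · have : e u = ⟨0, h0⟩ := Fin.ext h2
          rw [← e.symm_apply_apply u, this]
        · have : n - 1 = 0 := h3; omega
      · rintro rfl
        rw [e.apply_symm_apply]
        refine ⟨?_, Or.inr (Or.inl ⟨by show n - 1 + 1 = n; omega, rfl⟩)⟩
        intro h; rw [Fin.mk.injEq] at h; omega
    · intro u v hu hv huv
      apply e.map_rel_iff.mp
      rw [completePlusLeaf_adj]
      have hu' : (e u : ℕ) ≠ n - 1 := by
        intro h
        apply hu
        rw [← e.symm_apply_apply u, (Fin.ext h : e u = ⟨n - 1, hlast⟩)]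
      have hv' : (e v : ℕ) ≠ n - 1 := by
        intro h
        apply hv
        rw [← e.symm_apply_apply v, (Fin.ext h : e v = ⟨n - 1, hlast⟩)]
      have h1 := (e u).isLt
      have h2 := (e v).isLt
      refine ⟨fun h => huv (e.injective h), Or.inl ⟨by omega, by omega⟩⟩

lemma sminusedge_iff_iso (hn : 3 ≤ Fintype.card V) :
    (∃ a b, SMinusEdge G a b) ↔ Nonempty (G ≃g completeMinusEdge (Fintype.card V)) := by
  set n := Fintype.card V with hcard
  have h0 : 0 < n := by omega
  have h1 : 1 < n := by omega
  constructor
  · rintro ⟨a, b, hme⟩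
    have hab : a ≠ b := hme.1
    have hij : (⟨0, h0⟩ : Fin n) ≠ ⟨1, h1⟩ := by
      intro h; rw [Fin.mk.injEq] at h; omega
    obtain ⟨e, hea, heb⟩ := exists_equiv_two (x := a) (y := b) hab hij
    have hva : ∀ u, ((e u : ℕ) = 0 ↔ u = a) := val_eq_iff e hea
    have hvb : ∀ u, ((e u : ℕ) = 1 ↔ u = b) := val_eq_iff e heb
    refine ⟨⟨e, ?_⟩⟩
    intro u v
    rw [completeMinusEdge_adj, sminusedge_adj_char hme u v]
    rw [hva u, hva v, hvb u, hvb v]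
    simp only [ne_eq, EmbeddingLike.apply_eq_iff_eq]
  · rintro ⟨e⟩
    refine ⟨e.symm ⟨0, h0⟩, e.symm ⟨1, h1⟩, ?_, ?_, ?_⟩
    · intro h
      have := e.symm.injective h
      rw [Fin.mk.injEq] at this; omega
    · intro hadj
      have := e.map_rel_iff.mpr hadj
      rw [completeMinusEdge_adj, e.apply_symm_apply, e.apply_symm_apply] at this
      exact this.2 (Or.inl ⟨rfl, rfl⟩)
    · intro u v huv hn1 hn2
      apply e.map_rel_iff.mp
      rw [completeMinusEdge_adj]
      refine ⟨fun h => huv (e.injective h), ?_⟩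
      rintro (⟨hu, hv⟩ | ⟨hu, hv⟩)
      · exact hn1 ⟨by rw [← e.symm_apply_apply u, (Fin.ext hu : e u = ⟨0, h0⟩)],
          by rw [← e.symm_apply_apply v, (Fin.ext hv : e v = ⟨1, h1⟩)]⟩
      · exact hn2 ⟨by rw [← e.symm_apply_apply u, (Fin.ext hu : e u = ⟨1, h1⟩)],
          by rw [← e.symm_apply_apply v, (Fin.ext hv : e v = ⟨0, h0⟩)]⟩

end WithCard

end Stmt19Aux

theorem stmt19 {V : Type*} [Fintype V] (G : SimpleGraph V) (hc : G.Connected)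
    (hn : 3 ≤ Fintype.card V) :
    LF.leakyForcingNumber G 1 = Fintype.card V - 1 ↔
      (Nonempty (G ≃g (⊤ : SimpleGraph (Fin (Fintype.card V)))) ∨
       Nonempty (G ≃g LF.starGraph (Fintype.card V)) ∨
       Nonempty (G ≃g LF.completePlusLeaf (Fintype.card V)) ∨
       Nonempty (G ≃g LF.completeMinusEdge (Fintype.card V))) := by
  classical
  open Stmt19Aux in
  rw [Stmt19Aux.z_eq_iff_bad hc hn]
  constructor
  · intro hbad
    rcases Stmt19Aux.classification hc hn hbad with h | ⟨c, h⟩ | ⟨p, q, h⟩ | ⟨a, b, h⟩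
    · exact Or.inl (Stmt19Aux.scomplete_iff_iso.mp h)
    · exact Or.inr (Or.inl ((Stmt19Aux.sstar_iff_iso hn).mp ⟨c, h⟩))
    · exact Or.inr (Or.inr (Or.inl ((Stmt19Aux.splusleaf_iff_iso hn).mp ⟨p, q, h⟩)))
    · exact Or.inr (Or.inr (Or.inr ((Stmt19Aux.sminusedge_iff_iso hn).mp ⟨a, b, h⟩)))
  · intro h x y hxy
    rcases h with h | h | h | h
    · exact (Stmt19Aux.scomplete_iff_iso.mpr h).bad hxy
    · obtain ⟨c, hs⟩ := (Stmt19Aux.sstar_iff_iso hn).mpr h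
      exact hs.bad hxy
    · obtain ⟨p, q, hs⟩ := (Stmt19Aux.splusleaf_iff_iso hn).mpr h
      exact hs.bad hxy
    · obtain ⟨a, b, hs⟩ := (Stmt19Aux.sminusedge_iff_iso hn).mpr h
      exact hs.bad hxy
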